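/- If 0 < p < 1 and the c_i are nonnegative with Σ c_i = 1, then E[(S-p)⁴] ≤ max(3, 1/(p(1-p)) - 3) · p²(1-p)² · (Σ c_i²)², where S = Σ c_i β_i with β_i iid Bernoulli(p). -/

import Mathlib

open MeasureTheory ProbabilityTheory

section Aux

variable {Ω : Type*} [MeasurableSpace Ω]

private lemma integrable_of_bdd (μ : Measure Ω) [IsProbabilityMeasure μ]
    {f : Ω → ℝ} (hf : Measurable f) {C : ℝ} (h : ∀ ω, |f ω| ≤ C) : Integrable f μ :=
  (integrable_const C).mono' hf.aestronglyMeasurable (Filter.Eventually.of_forall fun ω => by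
    simpa using h ω)

private lemma moments_aux (μ : Measure Ω) [IsProbabilityMeasure μ]
    (p : ℝ) (hp0 : 0 < p) (hp1 : p < 1)
    (β : ℕ → Ω → ℝ) (hmeas : ∀ i, Measurable (β i))
    (hval : ∀ i ω, β i ω = 0 ∨ β i ω = 1)
    (hβp : ∀ i, μ {ω | β i ω = 1} = ENNReal.ofReal p)
    (hindep : iIndepFun β μ)
    (c : ℕ → ℝ) (hc0 : ∀ i, 0 ≤ c i) :
    ∀ m : ℕ,
      ((∫ ω, (∑ i ∈ Finset.range m, c i * (β i ω - p)) ^ 2 ∂μ)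
        = (p*(1-p)) * ∑ i ∈ Finset.range m, (c i)^2) ∧
      ((∫ ω, (∑ i ∈ Finset.range m, c i * (β i ω - p)) ^ 4 ∂μ)
        = 3*(p*(1-p))^2 * (∑ i ∈ Finset.range m, (c i)^2)^2
          + ((p*(1-p)) - 6*(p*(1-p))^2) * ∑ i ∈ Finset.range m, (c i)^4) := by
  -- basic moments of a single Bernoulli
  have hmom : ∀ (k : ℕ) (i : ℕ), ∫ ω, (β i ω - p) ^ k ∂μ
      = p * (1-p)^k + (1-p) * (-p)^k := by
    intro k i
    have hA : MeasurableSet {ω | β i ω = 1} := hmeas i (measurableSet_singleton 1)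
    have hfe : (fun ω => (β i ω - p) ^ k)
        = fun ω => Set.indicator {ω | β i ω = 1} (fun _ => (1-p)^k - (-p)^k) ω + (-p)^k := by
      funext ω
      rcases hval i ω with h | h
      · rw [Set.indicator_of_notMem (by simp [h] : ω ∉ {ω | β i ω = 1}), h]
        ring
      · rw [Set.indicator_of_mem (by simp [h] : ω ∈ {ω | β i ω = 1}), h]
        ring
    rw [hfe, integral_add ((integrable_const _).indicator hA) (integrable_const _),
      integral_indicator_const _ hA, integral_const, measureReal_def, hβp i, probReal_univ]
    simp only [ENNReal.toReal_ofReal hp0.le, ENNReal.toReal_one, smul_eq_mul, one_smul]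
    ring
  set Y : ℕ → Ω → ℝ := fun i ω => c i * (β i ω - p) with hYdef
  set S : ℕ → Ω → ℝ := fun m ω => ∑ i ∈ Finset.range m, Y i ω with hSdef
  have hSs : ∀ m ω, S m ω = ∑ i ∈ Finset.range m, c i * (β i ω - p) := fun m ω => rfl
  have mY : ∀ i, Measurable (Y i) := fun i =>
    measurable_const.mul ((hmeas i).sub measurable_const)
  have mS : ∀ m, Measurable (S m) := fun m =>
    Finset.measurable_sum _ fun i _ => mY i
  have hYb : ∀ i ω, |Y i ω| ≤ c i := by
    intro i ω
    have h1 : |β i ω - p| ≤ 1 := by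
      rcases hval i ω with h | h <;> rw [h, abs_le] <;> constructor <;> linarith
    calc |Y i ω| = c i * |β i ω - p| := by
          rw [hYdef]; simp [abs_mul, abs_of_nonneg (hc0 i)]
      _ ≤ c i * 1 := by exact mul_le_mul_of_nonneg_left h1 (hc0 i)
      _ = c i := mul_one _
  have hSb : ∀ m ω, |S m ω| ≤ ∑ i ∈ Finset.range m, c i := fun m ω =>
    (Finset.abs_sum_le_sum_abs _ _).trans (Finset.sum_le_sum fun i _ => hYb i ω)
  -- integrability of all the products we need
  have hint : ∀ (m a b : ℕ), Integrable (fun ω => (S m ω)^a * (Y m ω)^b) μ := by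
    intro m a b
    refine integrable_of_bdd μ (((mS m).pow_const a).mul ((mY m).pow_const b))
      (C := (∑ i ∈ Finset.range m, c i)^a * (c m)^b) ?_
    intro ω
    rw [abs_mul, abs_pow, abs_pow]
    have h1 : |S m ω| ≤ ∑ i ∈ Finset.range m, c i := hSb m ω
    have h2 : |Y m ω| ≤ c m := hYb m ω
    exact mul_le_mul (pow_le_pow_left₀ (abs_nonneg _) h1 a)
      (pow_le_pow_left₀ (abs_nonneg _) h2 b) (pow_nonneg (abs_nonneg _) b)
      (pow_nonneg (Finset.sum_nonneg fun i _ => hc0 i) a)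
  -- independence of S m and Y m
  have hYindep : iIndepFun Y μ :=
    hindep.comp (fun i x => c i * (x - p))
      (fun i => measurable_const.mul (measurable_id.sub measurable_const))
  have hprod : ∀ (m a b : ℕ), ∫ ω, (S m ω)^a * (Y m ω)^b ∂μ
      = (∫ ω, (S m ω)^a ∂μ) * (∫ ω, (Y m ω)^b ∂μ) := by
    intro m a b
    have h0 : IndepFun (S m) (Y m) μ := by
      have h := hYindep.indepFun_sum_range_succ mY m
      have heq : (∑ j ∈ Finset.range m, Y j) = S m := by
        funext ω; rw [hSdef]; simp
      rwa [heq] at h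
    have h1 : IndepFun (fun ω => (S m ω)^a) (fun ω => (Y m ω)^b) μ :=
      h0.comp (measurable_id.pow_const a) (measurable_id.pow_const b)
    exact h1.integral_mul_eq_mul_integral ((mS m).pow_const a).aestronglyMeasurable
      ((mY m).pow_const b).aestronglyMeasurable
  -- single moments of Y
  have E1 : ∀ i, ∫ ω, Y i ω ∂μ = 0 := by
    intro i
    have h := hmom 1 i
    calc ∫ ω, Y i ω ∂μ = ∫ ω, c i * (β i ω - p)^1 ∂μ := by
          congr 1; funext ω; rw [hYdef]; ring
      _ = c i * ∫ ω, (β i ω - p)^1 ∂μ := integral_const_mul _ _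
      _ = 0 := by rw [h]; ring
  have E2 : ∀ i, ∫ ω, (Y i ω)^2 ∂μ = (p*(1-p)) * (c i)^2 := by
    intro i
    have h := hmom 2 i
    calc ∫ ω, (Y i ω)^2 ∂μ = ∫ ω, (c i)^2 * (β i ω - p)^2 ∂μ := by
          congr 1; funext ω; rw [hYdef]; ring
      _ = (c i)^2 * ∫ ω, (β i ω - p)^2 ∂μ := integral_const_mul _ _
      _ = (p*(1-p)) * (c i)^2 := by rw [h]; ring
  have E4 : ∀ i, ∫ ω, (Y i ω)^4 ∂μ = (p*(1-p)^4 + (1-p)*p^4) * (c i)^4 := by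
    intro i
    have h := hmom 4 i
    calc ∫ ω, (Y i ω)^4 ∂μ = ∫ ω, (c i)^4 * (β i ω - p)^4 ∂μ := by
          congr 1; funext ω; rw [hYdef]; ring
      _ = (c i)^4 * ∫ ω, (β i ω - p)^4 ∂μ := integral_const_mul _ _
      _ = (p*(1-p)^4 + (1-p)*p^4) * (c i)^4 := by rw [h]; ring
  have hS0 : ∀ m, ∫ ω, S m ω ∂μ = 0 := by
    intro m
    rw [hSdef]
    simp only
    rw [integral_finset_sum _ fun i _ => integrable_of_bdd μ (mY i) (hYb i)]
    simp [E1]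
  -- the main induction
  intro m
  induction m with
  | zero => simp
  | succ m ih =>
    obtain ⟨ih2, ih4⟩ := ih
    have i20 := hint m 2 0
    have i11 := hint m 1 1
    have i02 := hint m 0 2
    have i40 := hint m 4 0
    have i31 := hint m 3 1
    have i22 := hint m 2 2
    have i13 := hint m 1 3
    have i04 := hint m 0 4
    have hs1 : ∀ m, (∫ ω, (S m ω)^1 ∂μ) = 0 := by
      intro m; rw [show (fun ω => (S m ω)^1) = S m by funext ω; rw [pow_one]]; exact hS0 m
    have hy1 : ∀ m, (∫ ω, (Y m ω)^1 ∂μ) = 0 := by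
      intro m; rw [show (fun ω => (Y m ω)^1) = Y m by funext ω; rw [pow_one]]; exact E1 m
    have hpow0 : ∀ (f : Ω → ℝ), (∫ ω, (f ω)^0 ∂μ) = 1 := by
      intro f; simp
    constructor
    · have hfe : (fun ω => (∑ i ∈ Finset.range (m+1), c i * (β i ω - p)) ^ 2)
          = fun ω => (S m ω)^2 * (Y m ω)^0
            + (2 * ((S m ω)^1 * (Y m ω)^1) + (S m ω)^0 * (Y m ω)^2) := by
        funext ω
        rw [Finset.sum_range_succ, hSs, hYdef]
        simp only
        ring
      have ih2' : (∫ ω, (S m ω)^2 ∂μ) = p*(1-p) * ∑ i ∈ Finset.range m, (c i)^2 := ih2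
      have e1 : ∫ ω, ((S m ω)^2 * (Y m ω)^0
            + (2 * ((S m ω)^1 * (Y m ω)^1) + (S m ω)^0 * (Y m ω)^2)) ∂μ
          = (∫ ω, (S m ω)^2 * (Y m ω)^0 ∂μ)
            + ((∫ ω, 2 * ((S m ω)^1 * (Y m ω)^1) ∂μ)
              + ∫ ω, (S m ω)^0 * (Y m ω)^2 ∂μ) := by
        exact (integral_add i20 ((i11.const_mul 2).add i02)).trans
          (congrArg (fun z => (∫ ω, (S m ω)^2 * (Y m ω)^0 ∂μ) + z)
            (integral_add (i11.const_mul 2) i02))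
      rw [hfe, e1,
        integral_const_mul, hprod m 2 0, hprod m 1 1, hprod m 0 2,
        hy1, hpow0, hpow0, E2, ih2', Finset.sum_range_succ]
      ring
    · have hfe : (fun ω => (∑ i ∈ Finset.range (m+1), c i * (β i ω - p)) ^ 4)
          = fun ω => (S m ω)^4 * (Y m ω)^0
            + (4 * ((S m ω)^3 * (Y m ω)^1)
            + (6 * ((S m ω)^2 * (Y m ω)^2)
            + (4 * ((S m ω)^1 * (Y m ω)^3) + (S m ω)^0 * (Y m ω)^4))) := by
        funext ω
        rw [Finset.sum_range_succ, hSs, hYdef]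
        simp only
        ring
      have ih2' : (∫ ω, (S m ω)^2 ∂μ) = p*(1-p) * ∑ i ∈ Finset.range m, (c i)^2 := ih2
      have ih4' : (∫ ω, (S m ω)^4 ∂μ) = 3*(p*(1-p))^2 * (∑ i ∈ Finset.range m, (c i)^2)^2
          + ((p*(1-p)) - 6*(p*(1-p))^2) * ∑ i ∈ Finset.range m, (c i)^4 := ih4
      have e1 : ∫ ω, ((S m ω)^4 * (Y m ω)^0
            + (4 * ((S m ω)^3 * (Y m ω)^1)
            + (6 * ((S m ω)^2 * (Y m ω)^2)
            + (4 * ((S m ω)^1 * (Y m ω)^3) + (S m ω)^0 * (Y m ω)^4)))) ∂μ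
          = (∫ ω, (S m ω)^4 * (Y m ω)^0 ∂μ)
            + ((∫ ω, 4 * ((S m ω)^3 * (Y m ω)^1) ∂μ)
            + ((∫ ω, 6 * ((S m ω)^2 * (Y m ω)^2) ∂μ)
            + ((∫ ω, 4 * ((S m ω)^1 * (Y m ω)^3) ∂μ)
              + ∫ ω, (S m ω)^0 * (Y m ω)^4 ∂μ))) := by
        exact (integral_add i40
            ((i31.const_mul 4).add ((i22.const_mul 6).add ((i13.const_mul 4).add i04)))).trans
          (congrArg (fun z => (∫ ω, (S m ω)^4 * (Y m ω)^0 ∂μ) + z)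
            ((integral_add (i31.const_mul 4) ((i22.const_mul 6).add ((i13.const_mul 4).add i04))).trans
              (congrArg (fun z => (∫ ω, 4 * ((S m ω)^3 * (Y m ω)^1) ∂μ) + z)
                ((integral_add (i22.const_mul 6) ((i13.const_mul 4).add i04)).trans
                  (congrArg (fun z => (∫ ω, 6 * ((S m ω)^2 * (Y m ω)^2) ∂μ) + z)
                    (integral_add (i13.const_mul 4) i04))))))
      rw [hfe, e1,
        integral_const_mul, integral_const_mul, integral_const_mul,
        hprod m 4 0, hprod m 3 1, hprod m 2 2, hprod m 1 3, hprod m 0 4,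
        hy1, hs1, hpow0, hpow0, E2, E4, ih2', ih4',
        Finset.sum_range_succ, Finset.sum_range_succ (f := fun i => (c i)^4)]
      ring

end Aux


/-- **Bound on the fourth central moment.** For `S = ∑_{i<n} c i * β i` with `β i`
iid Bernoulli(p), `0 < p < 1`, and `c i ≥ 0` summing to `1`,
`E[(S-p)⁴] ≤ max 3 (1/(p(1-p)) - 3) · p²(1-p)² · (∑ c i ²)²`. -/
theorem fourth_central_moment_bound {Ω : Type*} [MeasurableSpace Ω]
    (μ : Measure Ω) [IsProbabilityMeasure μ] (p : ℝ) (hp0 : 0 < p) (hp1 : p < 1)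
    (β : ℕ → Ω → ℝ) (hmeas : ∀ i, Measurable (β i))
    (hval : ∀ i ω, β i ω = 0 ∨ β i ω = 1)
    (hβp : ∀ i, μ {ω | β i ω = 1} = ENNReal.ofReal p)
    (hindep : iIndepFun β μ)
    (n : ℕ) (c : ℕ → ℝ) (hc0 : ∀ i, 0 ≤ c i)
    (hsupp : ∀ i, n ≤ i → c i = 0)
    (hc1 : ∑ i ∈ Finset.range n, c i = 1) :
    (∫ ω, ((∑ i ∈ Finset.range n, c i * β i ω) - p) ^ 4 ∂μ) ≤
      max 3 (1 / (p * (1 - p)) - 3) * p ^ 2 * (1 - p) ^ 2 *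
        (∑ i ∈ Finset.range n, (c i) ^ 2) ^ 2 := by
  have hSe : (fun ω => ((∑ i ∈ Finset.range n, c i * β i ω) - p) ^ 4)
      = fun ω => (∑ i ∈ Finset.range n, c i * (β i ω - p)) ^ 4 := by
    funext ω
    congr 1
    simp only [mul_sub, Finset.sum_sub_distrib, ← Finset.sum_mul, hc1, one_mul]
  rw [hSe, (moments_aux μ p hp0 hp1 β hmeas hval hβp hindep c hc0 n).2]
  set q : ℝ := p * (1 - p) with hqdef
  have hq : 0 < q := by rw [hqdef]; nlinarith
  set A : ℝ := ∑ i ∈ Finset.range n, (c i)^2 with hAdef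
  set B : ℝ := ∑ i ∈ Finset.range n, (c i)^4 with hBdef
  have hA0 : 0 ≤ A := Finset.sum_nonneg fun i _ => by positivity
  have hB0 : 0 ≤ B := Finset.sum_nonneg fun i _ => by positivity
  have hBA : B ≤ A^2 := by
    rw [hBdef, hAdef]
    calc ∑ i ∈ Finset.range n, (c i)^4 = ∑ i ∈ Finset.range n, ((c i)^2)^2 := by
          apply Finset.sum_congr rfl; intro i _; ring
      _ ≤ (∑ i ∈ Finset.range n, (c i)^2)^2 :=
          Finset.sum_sq_le_sq_sum_of_nonneg fun i _ => by positivity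
  have hpq : max 3 (1/q - 3) * p ^ 2 * (1 - p) ^ 2 * A ^ 2
      = max 3 (1/q - 3) * (q^2 * A^2) := by rw [hqdef]; ring
  rw [hpq]
  have h3M : (3:ℝ) ≤ max 3 (1/q - 3) := le_max_left _ _
  have hIM : 1/q - 3 ≤ max 3 (1/q - 3) := le_max_right _ _
  have hqq : (1/q) * q = 1 := one_div_mul_cancel hq.ne'
  rcases le_or_gt (q - 6*q^2) 0 with h | h
  · have h1 : (q - 6*q^2) * B ≤ 0 := mul_nonpos_of_nonpos_of_nonneg h hB0
    nlinarith [mul_le_mul_of_nonneg_right h3M (by positivity : (0:ℝ) ≤ q^2 * A^2)]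
  · have h1 : (q - 6*q^2) * B ≤ (q - 6*q^2) * A^2 := mul_le_mul_of_nonneg_left hBA h.le
    have h2 : (1/q - 3) * (q^2 * A^2) ≤ max 3 (1/q - 3) * (q^2 * A^2) :=
      mul_le_mul_of_nonneg_right hIM (by positivity)
    have h3 : (1/q - 3) * (q^2 * A^2) = (q - 3*q^2) * A^2 := by
      have : (1/q) * q^2 = q := by
        calc (1/q) * q^2 = ((1/q) * q) * q := by ring
          _ = q := by rw [hqq, one_mul]
      nlinarith [this]
    nlinarith
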